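/- The inequality S(1,2,4) < 8π·(1+2+4−4) + 12π·E(2√2/3) holds; explicitly, (4π/√15)·( 30·E(1/√5) − 11·K(1/√5) ) < 24π + 12π·E(2√2/3). -/

import Mathlib

open Real

/-- Complete elliptic integral of the first kind. -/
noncomputable def completeEllipticK (k : ℝ) : ℝ :=
  ∫ θ in (0:ℝ)..(π/2), 1 / Real.sqrt (1 - k^2 * Real.sin θ ^ 2)

/-- Complete elliptic integral of the second kind. -/
noncomputable def completeEllipticE (k : ℝ) : ℝ :=
  ∫ θ in (0:ℝ)..(π/2), Real.sqrt (1 - k^2 * Real.sin θ ^ 2)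

lemma hk5 : (1 / Real.sqrt 5 : ℝ)^2 = 1/5 := by
  rw [div_pow, one_pow, Real.sq_sqrt (by norm_num : (5:ℝ) ≥ 0)]

lemma Ek_le : completeEllipticE (1 / Real.sqrt 5) ≤ 19 * π / 40 := by
  unfold completeEllipticE
  rw [hk5]
  have hπ : (0:ℝ) ≤ π/2 := by positivity
  have hcont : Continuous (fun θ : ℝ => Real.sqrt (1 - 1/5 * Real.sin θ ^ 2)) :=
    (continuous_const.sub (continuous_const.mul (Real.continuous_sin.pow 2))).sqrt
  have hcont2 : Continuous (fun θ : ℝ => 1 - 1/10 * Real.sin θ ^ 2) :=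
    continuous_const.sub (continuous_const.mul (Real.continuous_sin.pow 2))
  have hmono : ∀ θ ∈ Set.Icc (0:ℝ) (π/2),
      Real.sqrt (1 - 1/5 * Real.sin θ ^ 2) ≤ 1 - 1/10 * Real.sin θ ^ 2 := by
    intro θ _
    have hs := Real.sin_sq_le_one θ
    have hs0 := sq_nonneg (Real.sin θ)
    have hnn : (0:ℝ) ≤ 1 - 1/10 * Real.sin θ ^ 2 := by nlinarith
    have hle : 1 - 1/5 * Real.sin θ ^ 2 ≤ (1 - 1/10 * Real.sin θ ^ 2)^2 := by nlinarith
    calc Real.sqrt (1 - 1/5 * Real.sin θ ^ 2) ≤ Real.sqrt ((1 - 1/10 * Real.sin θ ^ 2)^2) :=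
          Real.sqrt_le_sqrt hle
      _ = 1 - 1/10 * Real.sin θ ^ 2 := Real.sqrt_sq hnn
  calc (∫ θ in (0:ℝ)..(π/2), Real.sqrt (1 - 1/5 * Real.sin θ ^ 2))
      ≤ ∫ θ in (0:ℝ)..(π/2), (1 - 1/10 * Real.sin θ ^ 2) :=
        intervalIntegral.integral_mono_on hπ (hcont.intervalIntegrable _ _)
          (hcont2.intervalIntegrable _ _) hmono
    _ = 19 * π / 40 := by
        rw [intervalIntegral.integral_sub (f := fun _ => (1:ℝ)) (g := fun θ => 1/10 * Real.sin θ ^ 2) intervalIntegrable_const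
          ((continuous_const.mul (Real.continuous_sin.pow 2)).intervalIntegrable _ _),
          intervalIntegral.integral_const_mul, integral_sin_sq]
        simp
        ring

lemma Kk_ge : π/2 ≤ completeEllipticK (1 / Real.sqrt 5) := by
  unfold completeEllipticK
  rw [hk5]
  have hπ : (0:ℝ) ≤ π/2 := by positivity
  have hpos : ∀ θ : ℝ, (0:ℝ) < 1 - 1/5 * Real.sin θ ^ 2 := by
    intro θ; nlinarith [Real.sin_sq_le_one θ]
  have hcont : Continuous (fun θ : ℝ => 1 / Real.sqrt (1 - 1/5 * Real.sin θ ^ 2)) := by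
    apply continuous_const.div
      (continuous_const.sub (continuous_const.mul (Real.continuous_sin.pow 2))).sqrt
    intro θ
    exact ne_of_gt (Real.sqrt_pos.mpr (hpos θ))
  have hmono : ∀ θ ∈ Set.Icc (0:ℝ) (π/2),
      (1:ℝ) ≤ 1 / Real.sqrt (1 - 1/5 * Real.sin θ ^ 2) := by
    intro θ _
    rw [le_div_iff₀ (Real.sqrt_pos.mpr (hpos θ)), one_mul]
    exact Real.sqrt_le_one.mpr (by nlinarith [sq_nonneg (Real.sin θ)])
  calc π/2 = ∫ _ in (0:ℝ)..(π/2), (1:ℝ) := by simp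
    _ ≤ _ := intervalIntegral.integral_mono_on hπ intervalIntegrable_const
        (hcont.intervalIntegrable _ _) hmono

lemma E89_ge : π/6 ≤ completeEllipticE (2 * Real.sqrt 2 / 3) := by
  unfold completeEllipticE
  have hk : (2 * Real.sqrt 2 / 3 : ℝ)^2 = 8/9 := by
    rw [div_pow, mul_pow, Real.sq_sqrt (by norm_num : (2:ℝ) ≥ 0)]
    norm_num
  rw [hk]
  have hπ : (0:ℝ) ≤ π/2 := by positivity
  have hcont : Continuous (fun θ : ℝ => Real.sqrt (1 - 8/9 * Real.sin θ ^ 2)) :=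
    (continuous_const.sub (continuous_const.mul (Real.continuous_sin.pow 2))).sqrt
  have hmono : ∀ θ ∈ Set.Icc (0:ℝ) (π/2),
      (1/3 : ℝ) ≤ Real.sqrt (1 - 8/9 * Real.sin θ ^ 2) := by
    intro θ _
    have : ((1:ℝ)/3) = Real.sqrt (1/9) := by
      rw [show (1/9:ℝ) = (1/3)^2 by norm_num, Real.sqrt_sq (by norm_num)]
    rw [this]
    exact Real.sqrt_le_sqrt (by nlinarith [Real.sin_sq_le_one θ])
  calc π/6 = ∫ _ in (0:ℝ)..(π/2), (1/3:ℝ) := by simp; ring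
    _ ≤ _ := intervalIntegral.integral_mono_on hπ intervalIntegrable_const
        (hcont.intervalIntegrable _ _) hmono

/-- The area `S(a,b,c)` of the generalized Lawson surface `T_{a,b,c}`. -/
noncomputable def lawsonArea (a b c : ℝ) : ℝ :=
  4 * π / Real.sqrt (c^2 - a^2) *
    (2 * (c^2 - a^2) * completeEllipticE (Real.sqrt ((b^2 - a^2) / (c^2 - a^2)))
      - (c^2 - a^2 - b^2) * completeEllipticK (Real.sqrt ((b^2 - a^2) / (c^2 - a^2))))

/-- The exceptional case `(a,b,c) = (1,2,4)`:
`(4π/√15)(30E(1/√5) − 11K(1/√5)) < 24π + 12πE(2√2/3)`. -/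
theorem exceptional_124 :
    lawsonArea 1 2 4 < 8 * π * (1 + 2 + 4 - 4)
        + 12 * π * completeEllipticE (2 * Real.sqrt 2 / 3) ∧
    4 * π / Real.sqrt 15 * (30 * completeEllipticE (1 / Real.sqrt 5)
        - 11 * completeEllipticK (1 / Real.sqrt 5))
      < 24 * π + 12 * π * completeEllipticE (2 * Real.sqrt 2 / 3) := by
  have hs0 : (0:ℝ) < Real.sqrt 15 := Real.sqrt_pos.mpr (by norm_num)
  have hs : Real.sqrt 15 ^ 2 = 15 := Real.sq_sqrt (by norm_num)
  have h387 : (3.87:ℝ) < Real.sqrt 15 := by nlinarith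
  have hπl := Real.pi_gt_d6
  have hπu := Real.pi_lt_d2
  have hπ0 := Real.pi_pos
  have hE := Ek_le
  have hK := Kk_ge
  have hE2 := E89_ge
  have hc0 : (0:ℝ) < 4 * π / Real.sqrt 15 := by positivity
  have key : 4 * π / Real.sqrt 15 * (30 * completeEllipticE (1 / Real.sqrt 5)
        - 11 * completeEllipticK (1 / Real.sqrt 5))
      < 24 * π + 12 * π * completeEllipticE (2 * Real.sqrt 2 / 3) := by
    have h1 : 30 * completeEllipticE (1 / Real.sqrt 5)
        - 11 * completeEllipticK (1 / Real.sqrt 5) ≤ 35 * π / 4 := by linarith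
    have h2 : 4 * π / Real.sqrt 15 * (30 * completeEllipticE (1 / Real.sqrt 5)
          - 11 * completeEllipticK (1 / Real.sqrt 5))
        ≤ 4 * π / Real.sqrt 15 * (35 * π / 4) :=
      mul_le_mul_of_nonneg_left h1 hc0.le
    have h3 : 4 * π / Real.sqrt 15 * (35 * π / 4) < 24 * π + 2 * π^2 := by
      rw [div_mul_eq_mul_div, div_lt_iff₀ hs0]
      nlinarith
    nlinarith
  refine ⟨?_, key⟩
  have harea : lawsonArea 1 2 4 = 4 * π / Real.sqrt 15 *
      (30 * completeEllipticE (1 / Real.sqrt 5)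
        - 11 * completeEllipticK (1 / Real.sqrt 5)) := by
    unfold lawsonArea
    rw [show ((2:ℝ)^2 - 1^2)/((4:ℝ)^2 - 1^2) = 5⁻¹ by norm_num, Real.sqrt_inv, one_div]
    norm_num
  rw [harea]
  have : 8 * π * (1 + 2 + 4 - 4 : ℝ) = 24 * π := by ring
  rw [this]
  exact key
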